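/- Let n, k, s be positive integers with k ≤ n, let f be a monotone s-CNF on the variable set K([n]), let R ⊆ K([n]) be a monotone restriction, and let d ≥ 0 be an integer with d + 1 ≤ k. Then there exists a monotone DNF g on K([n]) each of whose terms has the form K(A) for some set A ⊆ [n] with |A| ≤ 2d (hence each term has at most binom(2d,2) variables), such that g_R ≤ f_R (pointwise on subsets of K([n]) \ R) and |Z_R(f) \ Z_R(g)| ≤ s^{d+1} · binom(n−(d+1), k−(d+1)). -/

import Mathlib

/-- Edges of the complete graph on `[n] = Fin n`: non-diagonal unordered pairs.
This is the variable set `K([n])`. -/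
abbrev Edge (n : ℕ) := {e : Sym2 (Fin n) // ¬ e.IsDiag}

/-- `KE A` is the set of edges with both endpoints in `A`, i.e. `K(A)`. -/
def KE {n : ℕ} (A : Finset (Fin n)) : Finset (Edge n) :=
  Finset.univ.filter (fun e => e.1 ∈ A.sym2)

/-- Evaluation of the monotone CNF with set of clauses `C` on input `G`:
every clause must contain a true variable. -/
def cnfEval {α : Type} [DecidableEq α] (C : Finset (Finset α)) (G : Finset α) : Prop :=
  ∀ q ∈ C, (q ∩ G).Nonempty

/-- Evaluation of the monotone DNF with set of terms `D` on input `G`: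
some term must have all its variables true. -/
def dnfEval {α : Type} (D : Finset (Finset α)) (G : Finset α) : Prop :=
  ∃ q ∈ D, q ⊆ G

open Classical in
/-- `ZR k F R` is `Z_R(F)`: the set of `k`-element vertex sets `A ⊆ [n]` such
that `F(K(A) ∪ R) = 1`, i.e. the cliques forcing `F` to true under the
monotone restriction fixing the variables in `R` to true. -/
noncomputable def ZR {n : ℕ} (k : ℕ) (F : Finset (Edge n) → Prop)
    (R : Finset (Edge n)) : Finset (Finset (Fin n)) :=
  Finset.univ.filter (fun A => A.card = k ∧ F (KE A ∪ R))

open Finset in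
/-- The (at most two) endpoints of an edge, as a finset. -/
noncomputable def vset {n : ℕ} (e : Edge n) : Finset (Fin n) :=
  Finset.univ.filter (· ∈ e.1)

open Finset in
lemma mem_KE_iff {n : ℕ} (e : Edge n) (S : Finset (Fin n)) :
    e ∈ KE S ↔ vset e ⊆ S := by
  simp only [KE, vset, mem_filter, mem_univ, true_and, Finset.mem_sym2_iff]
  constructor
  · intro h x hx
    simp only [mem_filter, mem_univ, true_and] at hx
    exact h x hx
  · intro h x hx
    exact h (by simp only [mem_filter, mem_univ, true_and]; exact hx)

open Finset in
lemma vset_card_le {n : ℕ} (e : Edge n) : (vset e).card ≤ 2 := by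
  unfold vset
  induction e.1 using Sym2.ind with
  | _ x y =>
    have hsub : Finset.univ.filter (· ∈ s(x, y)) ⊆ ({x, y} : Finset (Fin n)) := by
      intro z hz
      simp only [mem_filter, mem_univ, true_and, Sym2.mem_iff] at hz
      simp only [mem_insert, mem_singleton]
      exact hz
    calc (Finset.univ.filter (· ∈ s(x, y))).card ≤ ({x, y} : Finset (Fin n)).card :=
          card_le_card hsub
      _ ≤ 2 := by
          apply (card_insert_le _ _).trans
          simp

open Finset in
lemma KE_mono {n : ℕ} {A B : Finset (Fin n)} (h : A ⊆ B) : KE A ⊆ KE B := by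
  intro e he
  rw [mem_KE_iff] at he ⊢
  exact he.trans h

open Finset in
/-- The canonical decision-tree construction: at depth budget `δ` starting
from vertex set `B`, we get terms `T` (satisfied nodes) and leaves `L`. -/
lemma tree_lemma {n : ℕ} (s : ℕ)
    (C : Finset (Finset (Edge n))) (hC : ∀ q ∈ C, q.card ≤ s)
    (R : Finset (Edge n)) :
    ∀ (δ : ℕ) (B : Finset (Fin n)), ∃ T L : Finset (Finset (Fin n)),
      (∀ A ∈ T, A.card + 2 ≤ B.card + 2 * δ) ∧
      (∀ A ∈ T, cnfEval C (KE A ∪ R)) ∧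
      (∀ Bl ∈ L, B.card + δ ≤ Bl.card) ∧
      L.card ≤ s ^ δ ∧
      (∀ A : Finset (Fin n), B ⊆ A → cnfEval C (KE A ∪ R) →
        (∃ B' ∈ T, B' ⊆ A) ∨ (∃ Bl ∈ L, Bl ⊆ A)) := by
  intro δ
  induction δ with
  | zero =>
    intro B
    refine ⟨∅, {B}, by simp, by simp, ?_, by simp, ?_⟩
    · intro Bl hBl; simp only [mem_singleton] at hBl; subst hBl; simp
    · intro A hBA _
      exact Or.inr ⟨B, mem_singleton_self B, hBA⟩
  | succ δ ih =>
    intro B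
    by_cases h : cnfEval C (KE B ∪ R)
    · refine ⟨{B}, ∅, ?_, ?_, by simp, ?_, ?_⟩
      · intro A hA; simp only [mem_singleton] at hA; subst hA; omega
      · intro A hA; simp only [mem_singleton] at hA; subst hA; exact h
      · simp
      · intro A hBA _
        exact Or.inl ⟨B, mem_singleton_self B, hBA⟩
    · -- pick an unsatisfied clause
      have h' : ∃ q ∈ C, ¬ (q ∩ (KE B ∪ R)).Nonempty := by
        by_contra hcon
        push_neg at hcon
        exact h hcon
      obtain ⟨q, hqC, hq⟩ := h'
      have hqe : ∀ e ∈ q, e ∉ KE B ∧ e ∉ R := by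
        intro e he
        constructor <;> intro hmem <;> exact hq ⟨e, mem_inter.mpr ⟨he, mem_union.mpr (by tauto)⟩⟩
      choose Tf Lf hT1 hT2 hL1 hL2 hcov using ih
      refine ⟨q.biUnion (fun e => Tf (B ∪ vset e)),
              q.biUnion (fun e => Lf (B ∪ vset e)), ?_, ?_, ?_, ?_, ?_⟩
      · intro A hA
        obtain ⟨e, he, hAe⟩ := mem_biUnion.mp hA
        have h1 := hT1 (B ∪ vset e) A hAe
        have h2 : (B ∪ vset e).card ≤ B.card + 2 :=
          (card_union_le _ _).trans (by have := vset_card_le e; omega)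
        omega
      · intro A hA
        obtain ⟨e, he, hAe⟩ := mem_biUnion.mp hA
        exact hT2 (B ∪ vset e) A hAe
      · intro Bl hBl
        obtain ⟨e, he, hBle⟩ := mem_biUnion.mp hBl
        have h1 := hL1 (B ∪ vset e) Bl hBle
        have hgrow : B.card + 1 ≤ (B ∪ vset e).card := by
          have hne : ¬ vset e ⊆ B := fun hsub => (hqe e he).1 ((mem_KE_iff e B).mpr hsub)
          obtain ⟨u, hu, huB⟩ := not_subset.mp hne
          have : B ⊂ B ∪ vset e :=
            ⟨subset_union_left, fun hsub => huB (hsub (mem_union_right _ hu))⟩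
          exact card_lt_card this
        omega
      · calc (q.biUnion (fun e => Lf (B ∪ vset e))).card
            ≤ ∑ e ∈ q, (Lf (B ∪ vset e)).card := card_biUnion_le
          _ ≤ q.card • s ^ δ := sum_le_card_nsmul _ _ _ (fun e _ => hL2 (B ∪ vset e))
          _ = q.card * s ^ δ := by rw [smul_eq_mul]
          _ ≤ s * s ^ δ := Nat.mul_le_mul_right _ (hC q hqC)
          _ = s ^ (δ + 1) := by ring
      · intro A hBA hA
        obtain ⟨e, hemem⟩ := hA q hqC
        rw [mem_inter, mem_union] at hemem
        obtain ⟨heq, hKR⟩ := hemem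
        have heKA : e ∈ KE A := by
          rcases hKR with h1 | h1
          · exact h1
          · exact absurd h1 (hqe e heq).2
        have hsub : B ∪ vset e ⊆ A :=
          union_subset hBA ((mem_KE_iff e A).mp heKA)
        rcases hcov (B ∪ vset e) A hsub hA with ⟨B', hB', hB'A⟩ | ⟨Bl, hBl, hBlA⟩
        · exact Or.inl ⟨B', mem_biUnion.mpr ⟨e, heq, hB'⟩, hB'A⟩
        · exact Or.inr ⟨Bl, mem_biUnion.mpr ⟨e, heq, hBl⟩, hBlA⟩

open Finset in
/-- Counting `k`-sets containing a fixed set of size at least `m`. -/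
lemma count_supersets {n k m : ℕ} (Bl : Finset (Fin n)) (hm : m ≤ Bl.card) :
    (Finset.univ.filter (fun A : Finset (Fin n) => A.card = k ∧ Bl ⊆ A)).card ≤
      Nat.choose (n - m) (k - m) := by
  obtain ⟨B₀, hB₀sub, hB₀card⟩ := Finset.exists_subset_card_eq hm
  have hstep : (Finset.univ.filter (fun A : Finset (Fin n) => A.card = k ∧ Bl ⊆ A)).card ≤
      (Finset.powersetCard (k - m) (Finset.univ \ B₀)).card := by
    apply card_le_card_of_injOn (fun A => A \ B₀)
    · intro A hA
      simp only [coe_filter, Set.mem_setOf_eq, mem_univ, true_and] at hA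
      obtain ⟨hcard, hsub⟩ := hA
      have hB₀A : B₀ ⊆ A := hB₀sub.trans hsub
      rw [Finset.mem_coe, Finset.mem_powersetCard]
      refine ⟨sdiff_subset_sdiff (subset_univ A) (le_refl _), ?_⟩
      rw [card_sdiff_of_subset hB₀A, hcard, hB₀card]
    · intro A hA A' hA' heq
      simp only [coe_filter, Set.mem_setOf_eq, mem_univ, true_and] at hA hA'
      have hB₀A : B₀ ⊆ A := hB₀sub.trans hA.2
      have hB₀A' : B₀ ⊆ A' := hB₀sub.trans hA'.2
      calc A = A \ B₀ ∪ B₀ := (sdiff_union_of_subset hB₀A).symm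
        _ = A' \ B₀ ∪ B₀ := by rw [show A \ B₀ = A' \ B₀ from heq]
        _ = A' := sdiff_union_of_subset hB₀A'
  rw [Finset.card_powersetCard] at hstep
  have : (Finset.univ \ B₀).card = n - m := by
    rw [card_sdiff_of_subset (subset_univ B₀), hB₀card, card_univ, Fintype.card_fin]
  rwa [this] at hstep

/-- CNF to DNF switching, clique-term form: for every monotone `s`-CNF `f` on
`K([n])`, monotone restriction `R`, and depth parameter `d` with `d + 1 ≤ k`,
there is a monotone DNF `g` whose terms are of the form `K(A)` with
`|A| ≤ 2d` (hence with at most `C(2d,2)` variables each), such that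
`g_R ≤ f_R` and `|Z_R(f) \ Z_R(g)| ≤ s^(d+1) · C(n-(d+1), k-(d+1))`. -/
theorem cnf_to_dnf_switching_clique_terms
    (n k s d : ℕ) (hn : 0 < n) (hk : 0 < k) (hs : 0 < s)
    (hkn : k ≤ n) (hd : d + 1 ≤ k)
    (C : Finset (Finset (Edge n))) (hC : ∀ q ∈ C, q.card ≤ s)
    (R : Finset (Edge n)) :
    ∃ T : Finset (Finset (Fin n)),
      (∀ A ∈ T, A.card ≤ 2 * d) ∧
      (∀ G : Finset (Edge n), G ⊆ Rᶜ →
        dnfEval (T.image KE) (G ∪ R) → cnfEval C (G ∪ R)) ∧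
      (ZR k (cnfEval C) R \ ZR k (dnfEval (T.image KE)) R).card ≤
        s ^ (d + 1) * Nat.choose (n - (d + 1)) (k - (d + 1)) := by
  classical
  obtain ⟨T, L, hT1, hT2, hL1, hL2, hcov⟩ := tree_lemma s C hC R (d + 1) ∅
  refine ⟨T, ?_, ?_, ?_⟩
  · intro A hA
    have := hT1 A hA
    simp only [Finset.card_empty] at this
    omega
  · intro G _ hdnf
    obtain ⟨t, htmem, htsub⟩ := hdnf
    obtain ⟨A, hAT, rfl⟩ := Finset.mem_image.mp htmem
    intro c hc
    have hsat := hT2 A hAT c hc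
    refine hsat.mono (Finset.inter_subset_inter (le_refl _) ?_)
    exact Finset.union_subset htsub Finset.subset_union_right
  · -- error bound
    have hsubset : ZR k (cnfEval C) R \ ZR k (dnfEval (T.image KE)) R ⊆
        L.biUnion (fun Bl =>
          Finset.univ.filter (fun A : Finset (Fin n) => A.card = k ∧ Bl ⊆ A)) := by
      intro A hA
      rw [Finset.mem_sdiff] at hA
      obtain ⟨hAf, hAg⟩ := hA
      simp only [ZR, Finset.mem_filter, Finset.mem_univ, true_and] at hAf hAg
      obtain ⟨hAcard, hAcnf⟩ := hAf
      rcases hcov A (Finset.empty_subset A) hAcnf with ⟨B', hB'T, hB'A⟩ | ⟨Bl, hBl, hBlA⟩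
      · exfalso
        apply hAg
        refine ⟨hAcard, ⟨KE B', Finset.mem_image_of_mem KE hB'T, ?_⟩⟩
        exact (KE_mono hB'A).trans Finset.subset_union_left
      · exact Finset.mem_biUnion.mpr ⟨Bl, hBl,
          Finset.mem_filter.mpr ⟨Finset.mem_univ A, hAcard, hBlA⟩⟩
    calc (ZR k (cnfEval C) R \ ZR k (dnfEval (T.image KE)) R).card
        ≤ (L.biUnion (fun Bl =>
            Finset.univ.filter (fun A : Finset (Fin n) => A.card = k ∧ Bl ⊆ A))).card :=
          Finset.card_le_card hsubset
      _ ≤ ∑ Bl ∈ L, (Finset.univ.filter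
            (fun A : Finset (Fin n) => A.card = k ∧ Bl ⊆ A)).card :=
          Finset.card_biUnion_le
      _ ≤ L.card • Nat.choose (n - (d + 1)) (k - (d + 1)) := by
          apply Finset.sum_le_card_nsmul
          intro Bl hBl
          apply count_supersets
          have := hL1 Bl hBl
          simp only [Finset.card_empty] at this
          omega
      _ = L.card * Nat.choose (n - (d + 1)) (k - (d + 1)) := by rw [smul_eq_mul]
      _ ≤ s ^ (d + 1) * Nat.choose (n - (d + 1)) (k - (d + 1)) :=
          Nat.mul_le_mul_right _ hL2
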